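/- Let n ≥ 2 and 1 ≤ α ≤ n. Let A and B be n×n complex Hermitian positive definite matrices and t ∈ [0,1]; set C = (1−t)A + tB (also Hermitian positive definite). Then (σ_n(eig C)/σ_{n−α}(eig C))^{1/α} ≥ (1−t)·(σ_n(eig A)/σ_{n−α}(eig A))^{1/α} + t·(σ_n(eig B)/σ_{n−α}(eig B))^{1/α}. (This is the matrix-level concavity of the (n, n−α)-quotient operator governing equation (1.5) of the paper.) -/

import Mathlib

open scoped ComplexOrder

/-- The `k`-th elementary symmetric polynomial `σ_k` of `x ∈ ℝⁿ`. -/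
noncomputable def esymm {n : ℕ} (k : ℕ) (x : Fin n → ℝ) : ℝ :=
  ∑ s ∈ Finset.univ.powersetCard k, ∏ i ∈ s, x i

/-- The Gårding cone `Γ_k = {x : σ_j(x) > 0 for all 1 ≤ j ≤ k}`. -/
def GammaCone {n : ℕ} (k : ℕ) (x : Fin n → ℝ) : Prop :=
  ∀ j : ℕ, 1 ≤ j → j ≤ k → 0 < esymm j x

/-- The vector `x\^i ∈ ℝ^{n-1}` obtained from `x ∈ ℝⁿ` by deleting its `i`-th coordinate. -/
def deleteAt {n : ℕ} (x : Fin n → ℝ) (i : Fin n) (j : Fin (n - 1)) : ℝ :=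
  if (j : ℕ) < (i : ℕ) then x ⟨j, Nat.lt_of_lt_of_le j.isLt (Nat.sub_le n 1)⟩
  else x ⟨(j : ℕ) + 1, Nat.add_lt_of_lt_sub j.isLt⟩

set_option linter.unusedSectionVars false


open Finset

/-- AM-GM: `(∏ (1+ν))^{1/k} ≥ 1 + (∏ ν)^{1/k}`. -/
lemma prod_one_add_rpow {κ : Type*} [Fintype κ] (ν : κ → ℝ) (hν : ∀ i, 0 ≤ ν i)
    (hk : 1 ≤ Fintype.card κ) :
    1 + (∏ i, ν i) ^ ((Fintype.card κ : ℝ)⁻¹) ≤ (∏ i, (1 + ν i)) ^ ((Fintype.card κ : ℝ)⁻¹) := by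
  set k : ℝ := (Fintype.card κ : ℝ) with hkdef
  have hk0 : (0:ℝ) < k := by positivity
  have h1ν : ∀ i, (0:ℝ) < 1 + ν i := fun i => by have := hν i; linarith
  have hw : ∑ _i : κ, k⁻¹ = 1 := by
    rw [Finset.sum_const, card_univ, nsmul_eq_mul, ← hkdef, mul_inv_cancel₀ hk0.ne']
  have h1 : ∏ i, (1/(1 + ν i)) ^ (k⁻¹) ≤ ∑ i, k⁻¹ * (1/(1 + ν i)) :=
    Real.geom_mean_le_arith_mean_weighted univ _ _ (fun i _ => by positivity) hw
      (fun i _ => (div_pos one_pos (h1ν i)).le)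
  have h2 : ∏ i, (ν i/(1 + ν i)) ^ (k⁻¹) ≤ ∑ i, k⁻¹ * (ν i/(1 + ν i)) :=
    Real.geom_mean_le_arith_mean_weighted univ _ _ (fun i _ => by positivity) hw
      (fun i _ => div_nonneg (hν i) (h1ν i).le)
  have hsum : (∑ i, k⁻¹ * (1/(1 + ν i))) + (∑ i, k⁻¹ * (ν i/(1 + ν i))) = 1 := by
    rw [← Finset.sum_add_distrib, ← hw]
    refine Finset.sum_congr rfl fun i _ => ?_
    have h := (h1ν i).ne'
    rw [hw, ← mul_add, ← add_div, div_self h, mul_one]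
  set g1 := ∏ i, (1/(1 + ν i)) ^ (k⁻¹)
  set g2 := ∏ i, (ν i/(1 + ν i)) ^ (k⁻¹)
  have hg12 : g1 + g2 ≤ 1 := by
    calc g1 + g2 ≤ _ + _ := add_le_add h1 h2
    _ = 1 := hsum
  set Pk := ∏ i, (1 + ν i) ^ (k⁻¹) with hPk
  have hPk0 : 0 ≤ Pk := Finset.prod_nonneg fun i _ => Real.rpow_nonneg (h1ν i).le _
  have e1 : Pk * g1 = 1 := by
    rw [hPk, ← Finset.prod_mul_distrib]
    have : ∀ i ∈ univ (α := κ), (1 + ν i) ^ (k⁻¹) * (1/(1 + ν i)) ^ (k⁻¹) = 1 := by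
      intro i _
      rw [← Real.mul_rpow (h1ν i).le (div_pos one_pos (h1ν i)).le,
        mul_one_div_cancel (h1ν i).ne', Real.one_rpow]
    rw [Finset.prod_congr rfl this, Finset.prod_const_one]
  have e2 : Pk * g2 = (∏ i, ν i) ^ (k⁻¹) := by
    rw [hPk, ← Finset.prod_mul_distrib, ← Real.finset_prod_rpow _ _ (fun i _ => hν i)]
    refine Finset.prod_congr rfl fun i _ => ?_
    rw [← Real.mul_rpow (h1ν i).le (div_nonneg (hν i) (h1ν i).le)]
    congr 1
    rw [mul_comm]
    exact div_mul_cancel₀ _ (h1ν i).ne'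
  have e3 : (∏ i, (1 + ν i)) ^ (k⁻¹) = Pk :=
    (Real.finset_prod_rpow _ _ (fun i _ => (h1ν i).le) _).symm
  calc 1 + (∏ i, ν i) ^ (k⁻¹) = Pk * g1 + Pk * g2 := by rw [e1, e2]
  _ = Pk * (g1 + g2) := by ring
  _ ≤ Pk * 1 := by exact mul_le_mul_of_nonneg_left hg12 hPk0
  _ = (∏ i, (1 + ν i)) ^ (k⁻¹) := by rw [mul_one, e3]

/-- Convexity-type inequality `(x+y)^{-β} ≤ λ^{β+1} x^{-β} + (1-λ)^{β+1} y^{-β}`. -/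
lemma rpow_neg_add_le {β x y l : ℝ} (hβ : 0 < β) (hx : 0 < x) (hy : 0 < y)
    (hl : 0 < l) (hl1 : l < 1) :
    (x + y) ^ (-β) ≤ l ^ (β+1) * x ^ (-β) + (1 - l) ^ (β+1) * y ^ (-β) := by
  have hl' : (0:ℝ) < 1 - l := by linarith
  have hxl : 0 < x / l := by positivity
  have hyl : 0 < y / (1 - l) := by positivity
  have h1 : (x/l) ^ l * (y/(1-l)) ^ (1-l) ≤ x + y := by
    have := Real.geom_mean_le_arith_mean2_weighted hl.le hl'.le hxl.le hyl.le (by ring)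
    calc (x/l) ^ l * (y/(1-l)) ^ (1-l) ≤ l * (x/l) + (1-l) * (y/(1-l)) := this
    _ = x + y := by field_simp
  have h2 : (x + y) ^ (-β) ≤ ((x/l) ^ l * (y/(1-l)) ^ (1-l)) ^ (-β) :=
    Real.rpow_le_rpow_of_nonpos (by positivity) h1 (by linarith)
  have h3 : ((x/l) ^ l * (y/(1-l)) ^ (1-l)) ^ (-β)
      = ((x/l) ^ (-β)) ^ l * ((y/(1-l)) ^ (-β)) ^ (1-l) := by
    rw [Real.mul_rpow (by positivity) (by positivity), ← Real.rpow_mul hxl.le,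
      ← Real.rpow_mul hyl.le, mul_comm l (-β), mul_comm (1-l) (-β),
      Real.rpow_mul hxl.le, Real.rpow_mul hyl.le]
  have h4 : ((x/l) ^ (-β)) ^ l * ((y/(1-l)) ^ (-β)) ^ (1-l)
      ≤ l * (x/l) ^ (-β) + (1-l) * (y/(1-l)) ^ (-β) :=
    Real.geom_mean_le_arith_mean2_weighted hl.le hl'.le (by positivity) (by positivity) (by ring)
  have h5 : l * (x/l) ^ (-β) = l ^ (β+1) * x ^ (-β) := by
    rw [Real.div_rpow hx.le hl.le, Real.rpow_neg hl.le β, div_eq_mul_inv, inv_inv,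
      Real.rpow_add hl, Real.rpow_one]
    ring
  have h6 : (1-l) * (y/(1-l)) ^ (-β) = (1-l) ^ (β+1) * y ^ (-β) := by
    rw [Real.div_rpow hy.le hl'.le, Real.rpow_neg hl'.le β, div_eq_mul_inv, inv_inv,
      Real.rpow_add hl', Real.rpow_one]
    ring
  calc (x + y) ^ (-β) ≤ _ := h2
  _ = _ := h3
  _ ≤ _ := h4
  _ = _ := by rw [h5, h6]

/-- Reverse Minkowski for negative exponents, summed form. -/
lemma sum_rpow_neg_add_le {γ : Type*} (P : Finset γ) (hP : P.Nonempty) {β : ℝ} (hβ : 0 < β)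
    (a b : γ → ℝ) (ha : ∀ s ∈ P, 0 < a s) (hb : ∀ s ∈ P, 0 < b s) :
    ∑ s ∈ P, (a s + b s) ^ (-β) ≤
      ((∑ s ∈ P, a s ^ (-β)) ^ (-β⁻¹) + (∑ s ∈ P, b s ^ (-β)) ^ (-β⁻¹)) ^ (-β) := by
  set TA := ∑ s ∈ P, a s ^ (-β) with hTA
  set TB := ∑ s ∈ P, b s ^ (-β) with hTB
  obtain ⟨s₀, hs₀⟩ := hP
  have hTA0 : 0 < TA := Finset.sum_pos (fun s hs => Real.rpow_pos_of_pos (ha s hs) _) ⟨s₀, hs₀⟩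
  have hTB0 : 0 < TB := Finset.sum_pos (fun s hs => Real.rpow_pos_of_pos (hb s hs) _) ⟨s₀, hs₀⟩
  set SA := TA ^ (-β⁻¹) with hSA
  set SB := TB ^ (-β⁻¹) with hSB
  have hSA0 : 0 < SA := Real.rpow_pos_of_pos hTA0 _
  have hSB0 : 0 < SB := Real.rpow_pos_of_pos hTB0 _
  have hTA' : TA = SA ^ (-β) := by
    rw [hSA, ← Real.rpow_mul hTA0.le]
    rw [show -β⁻¹ * -β = 1 by field_simp, Real.rpow_one]
  have hTB' : TB = SB ^ (-β) := by
    rw [hSB, ← Real.rpow_mul hTB0.le]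
    rw [show -β⁻¹ * -β = 1 by field_simp, Real.rpow_one]
  set l := SA / (SA + SB) with hldef
  have hl : 0 < l := by positivity
  have hl1 : l < 1 := by
    rw [hldef, div_lt_one (by positivity)]
    linarith
  have hpt : ∀ s ∈ P, (a s + b s) ^ (-β) ≤ l^(β+1) * a s ^ (-β) + (1-l)^(β+1) * b s ^ (-β) :=
    fun s hs => rpow_neg_add_le hβ (ha s hs) (hb s hs) hl hl1
  have hsum : ∑ s ∈ P, (a s + b s) ^ (-β) ≤ l^(β+1) * TA + (1-l)^(β+1) * TB := by
    calc ∑ s ∈ P, (a s + b s) ^ (-β)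
        ≤ ∑ s ∈ P, (l^(β+1) * a s ^ (-β) + (1-l)^(β+1) * b s ^ (-β)) :=
          Finset.sum_le_sum hpt
    _ = l^(β+1) * TA + (1-l)^(β+1) * TB := by
          rw [Finset.sum_add_distrib, ← Finset.mul_sum, ← Finset.mul_sum]
  have h1ml : (1 - l) = SB / (SA + SB) := by
    rw [hldef]
    field_simp
    ring
  have key : l^(β+1) * TA + (1-l)^(β+1) * TB = (SA + SB) ^ (-β) := by
    rw [hTA', hTB', h1ml, hldef]
    rw [Real.div_rpow hSA0.le (by positivity), Real.div_rpow hSB0.le (by positivity)]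
    rw [div_mul_eq_mul_div, div_mul_eq_mul_div]
    rw [← Real.rpow_add hSA0, ← Real.rpow_add hSB0]
    rw [show β + 1 + -β = 1 by ring, Real.rpow_one, Real.rpow_one, ← add_div]
    have hpos : (0:ℝ) < SA + SB := by positivity
    calc (SA + SB) / (SA + SB) ^ (β+1) = (SA + SB) ^ (1:ℝ) / (SA + SB) ^ (β+1) := by
          rw [Real.rpow_one]
    _ = (SA + SB) ^ (1 - (β+1)) := (Real.rpow_sub hpos _ _).symm
    _ = (SA + SB) ^ (-β) := by norm_num
  linarith [hsum, key.le]

open scoped ComplexOrder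
open Finset Matrix

variable {ι κ : Type*} [Fintype ι] [DecidableEq ι] [Fintype κ] [DecidableEq κ]

private lemma extend_sum (x : κ → ℂ) {e : κ → ι} (he : Function.Injective e) (g : ι → ℂ) :
    ∑ k, g k * Function.extend e x 0 k = ∑ i, g (e i) * x i := by
  rw [← Finset.sum_subset (Finset.subset_univ (Finset.univ.image e))]
  · rw [Finset.sum_image (fun a _ b _ h => he h)]
    refine Finset.sum_congr rfl fun i _ => ?_
    rw [he.extend_apply]
  · intro j _ hj
    have : ¬ ∃ i, e i = j := by
      rintro ⟨i, rfl⟩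
      exact hj (Finset.mem_image_of_mem e (Finset.mem_univ i))
    rw [Function.extend_apply' _ _ _ this]
    simp

private lemma star_extend (x : κ → ℂ) {e : κ → ι} (he : Function.Injective e) :
    star (Function.extend e x 0) = Function.extend e (star x) 0 := by
  funext j
  by_cases h : ∃ i, e i = j
  · obtain ⟨i, rfl⟩ := h
    simp [he.extend_apply]
  · simp [Function.extend_apply' _ _ _ h, Pi.star_apply]

lemma Matrix.PosDef.submatrix_inj {M : Matrix ι ι ℂ} (hM : M.PosDef) {e : κ → ι}
    (he : Function.Injective e) : (M.submatrix e e).PosDef := by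
  refine Matrix.PosDef.of_dotProduct_mulVec_pos (hM.1.submatrix e) fun x hx => ?_
  · set y := Function.extend e x 0 with hy
    have hy0 : y ≠ 0 := by
      obtain ⟨i, hi⟩ := Function.ne_iff.mp hx
      intro h
      apply hi
      have : y (e i) = 0 := by rw [h]; rfl
      rwa [hy, he.extend_apply] at this
    have hMy : ∀ j, (M *ᵥ y) j = ∑ i', M j (e i') * x i' := fun j => by
      show ∑ k, M j k * y k = _
      rw [hy, extend_sum x he (fun k => M j k)]
    have key : star x ⬝ᵥ ((M.submatrix e e) *ᵥ x) = star y ⬝ᵥ (M *ᵥ y) := by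
      calc star x ⬝ᵥ ((M.submatrix e e) *ᵥ x)
          = ∑ i, star x i * ((M.submatrix e e) *ᵥ x) i := rfl
      _ = ∑ i, (M *ᵥ y) (e i) * star x i := by
          refine Finset.sum_congr rfl fun i _ => ?_
          rw [hMy (e i), mul_comm]
          rfl
      _ = ∑ j, (M *ᵥ y) j * (star y) j := by
          rw [hy, star_extend x he, extend_sum (star x) he (fun j => (M *ᵥ y) j)]
      _ = ∑ j, (star y) j * (M *ᵥ y) j := Finset.sum_congr rfl fun j _ => mul_comm _ _
      _ = star y ⬝ᵥ (M *ᵥ y) := rfl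
    rw [key]
    exact hM.dotProduct_mulVec_pos hy0

lemma Matrix.IsHermitian.det_eq_re {M : Matrix ι ι ℂ} (hM : M.IsHermitian) :
    M.det = ((M.det.re : ℝ) : ℂ) := by
  rw [hM.det_eq_prod_eigenvalues]
  norm_cast

lemma Matrix.PosDef.det_re_pos {M : Matrix ι ι ℂ} (hM : M.PosDef) : 0 < M.det.re := by
  have := hM.det_pos
  rw [Complex.lt_def] at this
  simpa using this.1

lemma Matrix.PosSemidef.det_re_nonneg {M : Matrix ι ι ℂ} (hM : M.PosSemidef) :
    0 ≤ M.det.re := by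
  have : M.det = ((∏ i, hM.1.eigenvalues i : ℝ) : ℂ) := by
    rw [hM.1.det_eq_prod_eigenvalues]; norm_cast
  rw [this, Complex.ofReal_re]
  exact Finset.prod_nonneg fun i _ => hM.eigenvalues_nonneg i

/-- Minkowski-type determinant inequality: for `X` positive definite and `F` positive
semidefinite, `det(X+F)^{1/k} ≥ det(X)^{1/k} + det(F)^{1/k}`. -/
lemma det_rpow_superadd {X F : Matrix κ κ ℂ} (hX : X.PosDef) (hF : F.PosSemidef)
    (hcard : 1 ≤ Fintype.card κ) :
    X.det.re ^ ((Fintype.card κ : ℝ)⁻¹) + F.det.re ^ ((Fintype.card κ : ℝ)⁻¹)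
      ≤ (X + F).det.re ^ ((Fintype.card κ : ℝ)⁻¹) := by
  classical
  set c : ℝ := ((Fintype.card κ : ℝ))⁻¹ with hc
  obtain ⟨hH, -⟩ := id hX
  set U : Matrix κ κ ℂ := (hH.eigenvectorUnitary : Matrix κ κ ℂ) with hU
  set lam := hH.eigenvalues with hlam
  set D : Matrix κ κ ℂ := Matrix.diagonal (fun i => ((lam i : ℝ) : ℂ)) with hD
  have hUU : U * star U = 1 := (Matrix.mem_unitaryGroup_iff).mp hH.eigenvectorUnitary.2
  have hUU' : star U * U = 1 := (Matrix.mem_unitaryGroup_iff').mp hH.eigenvectorUnitary.2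
  have hspec : X = U * D * star U := by
    convert hH.spectral_theorem using 2
    rw [Unitary.conjStarAlgAut_apply]; rfl
  -- conjugated F
  set F' : Matrix κ κ ℂ := star U * F * U with hF'
  have hF'psd : F'.PosSemidef := by
    have := hF.conjTranspose_mul_mul_same (B := U)
    rwa [← Matrix.star_eq_conjTranspose] at this
  have hXF : X + F = U * (D + F') * star U := by
    rw [Matrix.mul_add, Matrix.add_mul, ← hspec, hF']
    congr 1
    symm
    calc U * (star U * F * U) * star U = (U * star U) * F * (U * star U) := by
          simp only [Matrix.mul_assoc]
    _ = F := by rw [hUU]; simp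
  have hdetU : U.det * (star U).det = 1 := by
    rw [← Matrix.det_mul, hUU, Matrix.det_one]
  have hdetU' : (star U).det * U.det = 1 := by
    rw [← Matrix.det_mul, hUU', Matrix.det_one]
  have hdet1 : (X + F).det = (D + F').det := by
    rw [hXF, Matrix.det_mul, Matrix.det_mul, mul_right_comm, hdetU, one_mul]
  have hdetF : F.det = F'.det := by
    rw [hF', Matrix.det_mul, Matrix.det_mul, mul_right_comm, hdetU', one_mul]
  -- square root of D
  have hlam0 : ∀ i, 0 < lam i := fun i => hX.eigenvalues_pos i
  set r : κ → ℂ := fun i => ((Real.sqrt (lam i) : ℝ) : ℂ) with hr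
  have hr0 : ∀ i, r i ≠ 0 := fun i => by
    simp only [hr, ne_eq, Complex.ofReal_eq_zero]
    exact (Real.sqrt_pos.mpr (hlam0 i)).ne'
  set Rm : Matrix κ κ ℂ := Matrix.diagonal r with hRm
  set Ri : Matrix κ κ ℂ := Matrix.diagonal (fun i => (r i)⁻¹) with hRi
  have hRmRi : Rm * Ri = 1 := by
    rw [hRm, hRi, Matrix.diagonal_mul_diagonal,
      show (fun i => r i * (r i)⁻¹) = fun _ => (1:ℂ) from funext fun i => mul_inv_cancel₀ (hr0 i),
      Matrix.diagonal_one]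
  have hRiRm : Ri * Rm = 1 := by
    rw [hRm, hRi, Matrix.diagonal_mul_diagonal,
      show (fun i => (r i)⁻¹ * r i) = fun _ => (1:ℂ) from funext fun i => inv_mul_cancel₀ (hr0 i),
      Matrix.diagonal_one]
  have hRmRm : Rm * Rm = D := by
    rw [hRm, hD, Matrix.diagonal_mul_diagonal,
      show (fun i => r i * r i) = (fun i => ((lam i : ℝ) : ℂ)) from funext fun i => by
        rw [hr, ← Complex.ofReal_mul, Real.mul_self_sqrt (hlam0 i).le]]
  have hRiH : Riᴴ = Ri := by
    rw [hRi, Matrix.diagonal_conjTranspose,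
      show (star fun i => (r i)⁻¹) = (fun i => (r i)⁻¹) from funext fun i => by
        simp [hr, Pi.star_apply]]
  set G : Matrix κ κ ℂ := Ri * F' * Ri with hG
  have hGpsd : G.PosSemidef := by
    have := hF'psd.conjTranspose_mul_mul_same (B := Ri)
    rwa [hRiH] at this
  have hDF' : D + F' = Rm * (1 + G) * Rm := by
    rw [Matrix.mul_add, Matrix.add_mul, Matrix.mul_one, hRmRm, hG]
    refine congrArg (D + ·) ?_
    symm
    calc Rm * (Ri * F' * Ri) * Rm = (Rm * Ri) * F' * (Ri * Rm) := by
          simp only [Matrix.mul_assoc]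
    _ = F' := by rw [hRmRi, hRiRm]; simp
  have hF'G : F' = Rm * G * Rm := by
    rw [hG]
    calc F' = (Rm * Ri) * F' * (Ri * Rm) := by rw [hRmRi, hRiRm]; simp
    _ = Rm * (Ri * F' * Ri) * Rm := by simp only [Matrix.mul_assoc]
  -- eigenvalues of G
  set ν := hGpsd.1.eigenvalues with hν
  have hν0 : ∀ i, 0 ≤ ν i := fun i => hGpsd.eigenvalues_nonneg i
  set V : Matrix κ κ ℂ := (hGpsd.1.eigenvectorUnitary : Matrix κ κ ℂ) with hV
  have hVV : V * star V = 1 := (Matrix.mem_unitaryGroup_iff).mp hGpsd.1.eigenvectorUnitary.2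
  have hGspec : G = V * Matrix.diagonal (fun i => ((ν i : ℝ) : ℂ)) * star V := by
    convert hGpsd.1.spectral_theorem using 2
    rw [Unitary.conjStarAlgAut_apply]; rfl
  have hdetVV : V.det * (star V).det = 1 := by
    rw [← Matrix.det_mul, hVV, Matrix.det_one]
  have honeG : (1 : Matrix κ κ ℂ) + G = V * Matrix.diagonal (fun i => 1 + ((ν i : ℝ) : ℂ)) * star V := by
    have h1 : (1 : Matrix κ κ ℂ) = V * 1 * star V := by rw [Matrix.mul_one, hVV]
    rw [hGspec]
    nth_rewrite 1 [h1]
    rw [← Matrix.add_mul, ← Matrix.mul_add]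
    congr 2
    rw [← Matrix.diagonal_one, Matrix.diagonal_add]
  have hdet1G : (1 + G).det = ∏ i, (1 + ((ν i : ℝ) : ℂ)) := by
    rw [honeG, Matrix.det_mul, Matrix.det_mul, mul_right_comm, hdetVV, one_mul,
      Matrix.det_diagonal]
  have hdetG : G.det = ∏ i, ((ν i : ℝ) : ℂ) := by
    rw [hGspec, Matrix.det_mul, Matrix.det_mul, mul_right_comm, hdetVV, one_mul,
      Matrix.det_diagonal]
  have hdetD : D.det = ∏ i, ((lam i : ℝ) : ℂ) := by rw [hD, Matrix.det_diagonal]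
  have hdetRm2 : Rm.det * Rm.det = D.det := by rw [← Matrix.det_mul, hRmRm]
  -- final determinant computations
  have hdetXF : (X + F).det = ((∏ i, lam i) * ∏ i, (1 + ν i) : ℝ) := by
    rw [hdet1, hDF', Matrix.det_mul, Matrix.det_mul, mul_right_comm, hdetRm2, hdet1G, hdetD]
    push_cast
    ring
  have hdetX : X.det = ((∏ i, lam i : ℝ) : ℂ) := by
    rw [hH.det_eq_prod_eigenvalues]
    push_cast
    rfl
  have hdetF2 : F.det = ((∏ i, lam i) * ∏ i, ν i : ℝ) := by
    rw [hdetF, hF'G, Matrix.det_mul, Matrix.det_mul, mul_right_comm, hdetRm2, hdetG, hdetD]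
    push_cast
    ring
  rw [hdetXF, hdetX, hdetF2]
  simp only [Complex.ofReal_re]
  have hPl : 0 < ∏ i, lam i := Finset.prod_pos fun i _ => hlam0 i
  have hPν : 0 ≤ ∏ i, ν i := Finset.prod_nonneg fun i _ => hν0 i
  rw [Real.mul_rpow hPl.le hPν, Real.mul_rpow hPl.le
    (Finset.prod_nonneg fun i _ => by have := hν0 i; linarith)]
  have h1 := prod_one_add_rpow ν hν0 hcard
  calc (∏ i, lam i) ^ c + (∏ i, lam i) ^ c * (∏ i, ν i) ^ c
      = (∏ i, lam i) ^ c * (1 + (∏ i, ν i) ^ c) := by ring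
  _ ≤ (∏ i, lam i) ^ c * (∏ i, (1 + ν i)) ^ c := by
      exact mul_le_mul_of_nonneg_left h1 (Real.rpow_nonneg hPl.le _)
variable {κ₁ κ₂ : Type*} [Fintype κ₁] [DecidableEq κ₁] [Fintype κ₂] [DecidableEq κ₂]

/-- The Schur complement of the `₁₁` block. -/
noncomputable def Sc (W : Matrix (κ₁ ⊕ κ₂) (κ₁ ⊕ κ₂) ℂ) : Matrix κ₂ κ₂ ℂ :=
  W.toBlocks₂₂ - (W.toBlocks₁₂)ᴴ * (W.toBlocks₁₁)⁻¹ * W.toBlocks₁₂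

lemma blocks_eq {W : Matrix (κ₁ ⊕ κ₂) (κ₁ ⊕ κ₂) ℂ} (hW : W.IsHermitian) :
    W = Matrix.fromBlocks W.toBlocks₁₁ W.toBlocks₁₂ (W.toBlocks₁₂)ᴴ W.toBlocks₂₂ := by
  have h21 : W.toBlocks₂₁ = (W.toBlocks₁₂)ᴴ := by
    ext a b
    calc W.toBlocks₂₁ a b = W (Sum.inr a) (Sum.inl b) := rfl
    _ = Wᴴ (Sum.inr a) (Sum.inl b) := by rw [hW.eq]
    _ = (W.toBlocks₁₂)ᴴ a b := rfl
  rw [← h21, Matrix.fromBlocks_toBlocks]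

lemma toBlocks₁₁_posDef {W : Matrix (κ₁ ⊕ κ₂) (κ₁ ⊕ κ₂) ℂ} (hW : W.PosDef) :
    W.toBlocks₁₁.PosDef := by
  have : W.toBlocks₁₁ = W.submatrix Sum.inl Sum.inl := rfl
  rw [this]
  exact hW.submatrix_inj Sum.inl_injective

lemma toBlocks₂₂_posDef {W : Matrix (κ₁ ⊕ κ₂) (κ₁ ⊕ κ₂) ℂ} (hW : W.PosDef) :
    W.toBlocks₂₂.PosDef := by
  have : W.toBlocks₂₂ = W.submatrix Sum.inr Sum.inr := rfl
  rw [this]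
  exact hW.submatrix_inj Sum.inr_injective

lemma sc_posDef {W : Matrix (κ₁ ⊕ κ₂) (κ₁ ⊕ κ₂) ℂ} (hW : W.PosDef) : (Sc W).PosDef := by
  have hA := toBlocks₁₁_posDef hW
  letI : Invertible W.toBlocks₁₁ := hA.isUnit.invertible
  refine Matrix.PosDef.of_dotProduct_mulVec_pos ?_ ?_
  · exact (Matrix.IsHermitian.fromBlocks₁₁ _ _ hA.1).mp ((blocks_eq hW.1) ▸ hW.1)
  · intro x hx
    set u : κ₁ → ℂ := -(((W.toBlocks₁₁)⁻¹ * W.toBlocks₁₂) *ᵥ x) with hu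
    set v := Sum.elim u x with hv
    have hv0 : v ≠ 0 := by
      intro h
      apply hx
      funext j
      exact congrFun h (Sum.inr j)
    have h0 := hW.dotProduct_mulVec_pos hv0
    rw [Matrix.dotProduct_mulVec, hv] at h0
    nth_rewrite 1 [blocks_eq hW.1] at h0
    rw [Matrix.schur_complement_eq₁₁ _ _ _ _ hA.1, hu, neg_add_cancel] at h0
    simp only [star_zero, Matrix.zero_vecMul, zero_dotProduct, zero_add] at h0
    rwa [← Matrix.dotProduct_mulVec] at h0

lemma sc_superadd {W₁ W₂ : Matrix (κ₁ ⊕ κ₂) (κ₁ ⊕ κ₂) ℂ} (h1 : W₁.PosDef) (h2 : W₂.PosDef) :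
    (Sc (W₁ + W₂) - Sc W₁ - Sc W₂).PosSemidef := by
  have h12 : (W₁ + W₂).PosDef := h1.add h2
  have hA := toBlocks₁₁_posDef h12
  have hA1 := toBlocks₁₁_posDef h1
  have hA2 := toBlocks₁₁_posDef h2
  letI : Invertible (W₁ + W₂).toBlocks₁₁ := hA.isUnit.invertible
  letI : Invertible W₁.toBlocks₁₁ := hA1.isUnit.invertible
  letI : Invertible W₂.toBlocks₁₁ := hA2.isUnit.invertible
  refine Matrix.PosSemidef.of_dotProduct_mulVec_nonneg ?_ ?_
  · exact (((sc_posDef h12).1.sub (sc_posDef h1).1).sub (sc_posDef h2).1)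
  · intro x
    set u : κ₁ → ℂ := -((((W₁ + W₂).toBlocks₁₁)⁻¹ * (W₁ + W₂).toBlocks₁₂) *ᵥ x) with hu
    have key : star x ᵥ* (Sc (W₁ + W₂)) ⬝ᵥ x =
        star (Sum.elim u x) ᵥ* (W₁ + W₂) ⬝ᵥ (Sum.elim u x) := by
      nth_rewrite 2 [blocks_eq h12.1]
      rw [Matrix.schur_complement_eq₁₁ _ _ _ _ hA.1, hu, neg_add_cancel]
      simp only [star_zero, Matrix.zero_vecMul, zero_dotProduct, zero_add]
      rfl
    have hsplit : star (Sum.elim u x) ᵥ* (W₁ + W₂) ⬝ᵥ (Sum.elim u x) =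
        star (Sum.elim u x) ᵥ* W₁ ⬝ᵥ (Sum.elim u x) +
        star (Sum.elim u x) ᵥ* W₂ ⬝ᵥ (Sum.elim u x) := by
      rw [Matrix.vecMul_add, add_dotProduct]
    have hlow : ∀ (W : Matrix (κ₁ ⊕ κ₂) (κ₁ ⊕ κ₂) ℂ) (hWpd : W.PosDef)
        (_ : Invertible W.toBlocks₁₁),
        star x ᵥ* (Sc W) ⬝ᵥ x ≤ star (Sum.elim u x) ᵥ* W ⬝ᵥ (Sum.elim u x) := by
      intro W hWpd hinv
      nth_rewrite 2 [blocks_eq hWpd.1]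
      rw [Matrix.schur_complement_eq₁₁ _ _ _ _ (toBlocks₁₁_posDef hWpd).1]
      have hp : 0 ≤ star (u + ((W.toBlocks₁₁)⁻¹ * W.toBlocks₁₂) *ᵥ x) ᵥ* W.toBlocks₁₁ ⬝ᵥ
          (u + ((W.toBlocks₁₁)⁻¹ * W.toBlocks₁₂) *ᵥ x) := by
        rw [← Matrix.dotProduct_mulVec]
        exact (toBlocks₁₁_posDef hWpd).posSemidef.dotProduct_mulVec_nonneg _
      have : Sc W = W.toBlocks₂₂ - (W.toBlocks₁₂)ᴴ * (W.toBlocks₁₁)⁻¹ * W.toBlocks₁₂ := rfl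
      rw [this]
      exact le_add_of_nonneg_left hp
    have e1 := hlow W₁ h1 ‹_›
    have e2 := hlow W₂ h2 ‹_›
    have final : star x ᵥ* (Sc W₁) ⬝ᵥ x + star x ᵥ* (Sc W₂) ⬝ᵥ x
        ≤ star x ᵥ* (Sc (W₁ + W₂)) ⬝ᵥ x := by
      rw [key, hsplit]
      exact add_le_add e1 e2
    rw [Matrix.sub_mulVec, Matrix.sub_mulVec, dotProduct_sub, dotProduct_sub]
    simp only [Matrix.dotProduct_mulVec]
    have := sub_nonneg.mpr final
    calc (0:ℂ) ≤ star x ᵥ* (Sc (W₁+W₂)) ⬝ᵥ x -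
        (star x ᵥ* (Sc W₁) ⬝ᵥ x + star x ᵥ* (Sc W₂) ⬝ᵥ x) := this
    _ = star x ᵥ* (Sc (W₁+W₂)) ⬝ᵥ x - star x ᵥ* (Sc W₁) ⬝ᵥ x - star x ᵥ* (Sc W₂) ⬝ᵥ x := by ring

lemma sc_det {W : Matrix (κ₁ ⊕ κ₂) (κ₁ ⊕ κ₂) ℂ} (hW : W.PosDef) :
    W.det = (W.toBlocks₁₁).det * (Sc W).det := by
  have hA := toBlocks₁₁_posDef hW
  letI : Invertible W.toBlocks₁₁ := hA.isUnit.invertible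
  nth_rewrite 1 [blocks_eq hW.1]
  rw [Matrix.det_fromBlocks₁₁]
  congr 2
  rw [Matrix.invOf_eq_nonsing_inv]
  rfl
section Minors

open Polynomial

variable {ι : Type*} [Fintype ι] [DecidableEq ι]

/-- Principal minor of `M` on the rows/columns indexed by `s`. -/
noncomputable def minorDet {R : Type*} [CommRing R] (M : Matrix ι ι R) (s : Finset ι) : R :=
  (M.submatrix (fun i : {a // a ∈ s} => (i : ι)) (fun i : {a // a ∈ s} => (i : ι))).det

lemma det_rows_piecewise_one {R : Type*} [CommRing R] (M : Matrix ι ι R) (s : Finset ι) :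
    (Matrix.of fun i j => if i ∈ s then M i j else (1 : Matrix ι ι R) i j).det
      = minorDet M s := by
  classical
  set N := Matrix.of fun i j => if i ∈ s then M i j else (1 : Matrix ι ι R) i j with hN
  set e : {a // a ∈ s} ⊕ {a // ¬ a ∈ s} ≃ ι := Equiv.sumCompl (fun a => a ∈ s) with he
  rw [← Matrix.det_submatrix_equiv_self e N]
  have hblock : N.submatrix e e = Matrix.fromBlocks
      (M.submatrix (fun i : {a // a ∈ s} => (i : ι)) (fun i : {a // a ∈ s} => (i : ι)))
      (M.submatrix (fun i : {a // a ∈ s} => (i : ι)) (fun i : {a // ¬ a ∈ s} => (i : ι)))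
      (0 : Matrix {a // ¬ a ∈ s} {a // a ∈ s} R) (1 : Matrix {a // ¬ a ∈ s} {a // ¬ a ∈ s} R) := by
    ext i j
    cases i with
    | inl a =>
      cases j with
      | inl b => simp [hN, he, a.2]
      | inr b => simp [hN, he, a.2]
    | inr a =>
      cases j with
      | inl b =>
        have hab : (a : ι) ≠ (b : ι) := by
          intro h
          exact a.2 (h ▸ b.2)
        simp [hN, he, a.2, Matrix.one_apply, hab]
      | inr b =>
        by_cases hab : a = b
        · subst hab
          simp [hN, he, a.2, Matrix.one_apply]
        · have hab' : (a : ι) ≠ (b : ι) := fun h => hab (Subtype.ext h)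
          simp [hN, he, a.2, Matrix.one_apply, hab, hab']
  rw [hblock, Matrix.det_fromBlocks_zero₂₁, Matrix.det_one, mul_one]
  rfl

lemma det_X_one_add_C (M : Matrix ι ι ℂ) :
    (Matrix.of fun i j => Polynomial.C (M i j) + (X : ℂ[X]) * (1 : Matrix ι ι ℂ[X]) i j).det
      = ∑ s : Finset ι, (X : ℂ[X]) ^ (Fintype.card ι - s.card) * Polynomial.C (minorDet M s) := by
  classical
  set m : ι → ι → ℂ[X] := fun i j => Polynomial.C (M i j) with hm
  set m' : ι → ι → ℂ[X] := fun i j => (X : ℂ[X]) * (1 : Matrix ι ι ℂ[X]) i j with hm'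
  have expand := (Matrix.detRowAlternating (R := ℂ[X]) (n := ι)).toMultilinearMap.map_add_univ m m'
  rw [show (Matrix.of fun i j => Polynomial.C (M i j) + (X : ℂ[X]) * (1 : Matrix ι ι ℂ[X]) i j).det
      = (Matrix.detRowAlternating (R := ℂ[X]) (n := ι)).toMultilinearMap (m + m') from rfl]
  rw [expand]
  refine Finset.sum_congr rfl fun s _ => ?_
  -- evaluate det of the piecewise matrix
  set c : ι → ℂ[X] := fun i => if i ∈ s then 1 else (X : ℂ[X]) with hc
  set Ns : ι → ι → ℂ[X] := fun i j =>
    if i ∈ s then Polynomial.C (M i j) else (1 : Matrix ι ι ℂ[X]) i j with hNs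
  have hpiece : s.piecewise m m' = fun i => c i • Ns i := by
    funext i j
    by_cases h : i ∈ s
    · simp [Finset.piecewise, h, hc, hNs, hm]
    · simp [Finset.piecewise, h, hc, hNs, hm', smul_eq_mul]
  have hsmul := (Matrix.detRowAlternating (R := ℂ[X]) (n := ι)).toMultilinearMap.map_smul_univ c Ns
  rw [hpiece, hsmul]
  have hprod : (∏ i, c i) = (X : ℂ[X]) ^ (Fintype.card ι - s.card) := by
    rw [hc, Finset.prod_ite]
    have h1 : Finset.univ.filter (fun i => i ∈ s) = s := by ext i; simp
    have h2 : Finset.univ.filter (fun i => ¬ i ∈ s) = sᶜ := by ext i; simp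
    rw [h1, h2, Finset.prod_const_one, one_mul, Finset.prod_const, Finset.card_compl]
  have hNdet : (Matrix.detRowAlternating (R := ℂ[X]) (n := ι)).toMultilinearMap Ns
      = Polynomial.C (minorDet M s) := by
    have hmap : (Ns : Matrix ι ι ℂ[X]) =
        (Matrix.of fun i j => if i ∈ s then M i j else (1 : Matrix ι ι ℂ) i j).map
          (Polynomial.C : ℂ →+* ℂ[X]) := by
      funext i j
      by_cases h : i ∈ s
      · simp [hNs, h, Matrix.map_apply]
      · simp only [hNs, h, if_false, Matrix.map_apply, Matrix.of_apply, Matrix.one_apply]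
        split <;> simp
    have : (Matrix.detRowAlternating (R := ℂ[X]) (n := ι)).toMultilinearMap Ns
        = (Matrix.of Ns).det := rfl
    rw [this, show (Matrix.of Ns : Matrix ι ι ℂ[X]) = Ns from rfl, hmap, ← RingHom.mapMatrix_apply, ← RingHom.map_det, det_rows_piecewise_one]
  rw [hNdet, hprod, smul_eq_mul]

lemma det_X_one_add_C_eig {M : Matrix ι ι ℂ} (hM : M.IsHermitian) :
    (Matrix.of fun i j => Polynomial.C (M i j) + (X : ℂ[X]) * (1 : Matrix ι ι ℂ[X]) i j).det
      = ∏ i, ((X : ℂ[X]) + Polynomial.C ((hM.eigenvalues i : ℝ) : ℂ)) := by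
  classical
  set U : Matrix ι ι ℂ := (hM.eigenvectorUnitary : Matrix ι ι ℂ) with hU
  set lam := hM.eigenvalues with hlam
  set D : Matrix ι ι ℂ := Matrix.diagonal (fun i => ((lam i : ℝ) : ℂ)) with hD
  have hUU : U * star U = 1 := (Matrix.mem_unitaryGroup_iff).mp hM.eigenvectorUnitary.2
  have hspec : M = U * D * star U := by convert hM.spectral_theorem using 2
                                        rw [Unitary.conjStarAlgAut_apply]; rfl
  set Cr : ℂ →+* ℂ[X] := (Polynomial.C : ℂ →+* ℂ[X]) with hCr
  have hof : (Matrix.of fun i j => Polynomial.C (M i j) + (X : ℂ[X]) * (1 : Matrix ι ι ℂ[X]) i j)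
      = M.map Cr + (X : ℂ[X]) • (1 : Matrix ι ι ℂ[X]) := by
    funext i j
    simp [Matrix.map_apply, Matrix.add_apply, Matrix.smul_apply, smul_eq_mul, hCr]
  have hmapmul : ∀ (P Q : Matrix ι ι ℂ), (P * Q).map Cr = P.map Cr * Q.map Cr := fun P Q =>
    Matrix.map_mul
  have hsplit : M.map Cr + (X : ℂ[X]) • (1 : Matrix ι ι ℂ[X])
      = U.map Cr * (D.map Cr + (X : ℂ[X]) • (1 : Matrix ι ι ℂ[X])) * (star U).map Cr := by
    rw [Matrix.mul_add, Matrix.add_mul]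
    congr 1
    · rw [← hmapmul, ← hmapmul, ← hspec]
    · rw [Matrix.mul_smul, Matrix.smul_mul, Matrix.mul_one, ← hmapmul, hUU, Matrix.map_one]
      exact map_zero _
      exact map_one _
  rw [hof, hsplit, Matrix.det_mul, Matrix.det_mul, mul_right_comm]
  have hdet1 : (U.map Cr).det * ((star U).map Cr).det = 1 := by
    rw [← RingHom.mapMatrix_apply, ← RingHom.mapMatrix_apply, ← RingHom.map_det,
      ← RingHom.map_det, ← _root_.map_mul Cr, ← Matrix.det_mul, hUU, Matrix.det_one, _root_.map_one Cr]
  rw [hdet1, one_mul]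
  have hdiag : D.map Cr + (X : ℂ[X]) • (1 : Matrix ι ι ℂ[X])
      = Matrix.diagonal (fun i => (X : ℂ[X]) + Polynomial.C ((lam i : ℝ) : ℂ)) := by
    funext i j
    by_cases h : i = j
    · subst h
      simp [hD, Matrix.map_apply, Matrix.diagonal, Matrix.one_apply, add_comm, hCr]
    · simp [hD, Matrix.map_apply, Matrix.diagonal, Matrix.one_apply, h]
  rw [hdiag, Matrix.det_diagonal]

/-- Sum of principal `k×k` minors equals the `k`-th elementary symmetric polynomial
of the eigenvalues. -/
lemma sum_minors_eq {M : Matrix ι ι ℂ} (hM : M.IsHermitian) (k : ℕ) (hk : k ≤ Fintype.card ι) :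
    ∑ s ∈ Finset.univ.powersetCard k, minorDet M s
      = ((∑ t ∈ Finset.univ.powersetCard k, ∏ i ∈ t, hM.eigenvalues i : ℝ) : ℂ) := by
  classical
  set n := Fintype.card ι with hn
  have hpoly := (det_X_one_add_C M).symm.trans (det_X_one_add_C_eig hM)
  have hcoeff := congrArg (fun p : ℂ[X] => p.coeff (n - k)) hpoly
  -- LHS coefficient
  have hL : (∑ s : Finset ι, (X : ℂ[X]) ^ (n - s.card) * Polynomial.C (minorDet M s)).coeff (n - k)
      = ∑ s ∈ Finset.univ.powersetCard k, minorDet M s := by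
    rw [Polynomial.finset_sum_coeff]
    have hterm : ∀ s : Finset ι,
        ((X : ℂ[X]) ^ (n - s.card) * Polynomial.C (minorDet M s)).coeff (n - k)
        = if s.card = k then minorDet M s else 0 := by
      intro s
      rw [mul_comm, Polynomial.coeff_C_mul, Polynomial.coeff_X_pow]
      have hsn : s.card ≤ n := by rw [hn, ← Finset.card_univ]; exact Finset.card_le_card (Finset.subset_univ s)
      by_cases h : s.card = k
      · rw [if_pos h, if_pos (by omega), mul_one]
      · rw [if_neg (by omega), if_neg h, mul_zero]
    rw [Finset.sum_congr rfl fun s _ => hterm s]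
    rw [Finset.sum_ite, Finset.sum_const_zero, add_zero]
    congr 1
    ext s
    simp [Finset.mem_powersetCard_univ]
  -- RHS coefficient
  have hR : (∏ i, ((X : ℂ[X]) + Polynomial.C ((hM.eigenvalues i : ℝ) : ℂ))).coeff (n - k)
      = ((∑ t ∈ Finset.univ.powersetCard k, ∏ i ∈ t, hM.eigenvalues i : ℝ) : ℂ) := by
    have := Finset.prod_X_add_C_coeff (Finset.univ : Finset ι)
      (fun i => ((hM.eigenvalues i : ℝ) : ℂ)) (k := n - k) (by rw [Finset.card_univ]; omega)
    rw [this]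
    rw [Finset.card_univ, ← hn, show n - (n - k) = k by omega]
    push_cast
    rfl
  rw [← hL, hcoeff, hR]

end Minors
section Assembly

open Finset

variable {n α : ℕ}

/-- Normalized sum of principal minors. -/
noncomputable def TTq (n α : ℕ) (M : Matrix (Fin n) (Fin n) ℂ) : ℝ :=
  (∑ s ∈ Finset.univ.powersetCard (n - α), (minorDet M s).re) / M.det.re

/-- Determinant of the Schur complement associated to a subset. -/
noncomputable def phiq {n : ℕ} (M : Matrix (Fin n) (Fin n) ℂ) (s : Finset (Fin n)) : ℝ :=
  (Sc (M.submatrix (Equiv.sumCompl (· ∈ s)) (Equiv.sumCompl (· ∈ s)))).det.re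

lemma Wsub_posDef {M : Matrix (Fin n) (Fin n) ℂ} (hM : M.PosDef) (s : Finset (Fin n)) :
    (M.submatrix (Equiv.sumCompl (· ∈ s)) (Equiv.sumCompl (· ∈ s))).PosDef :=
  hM.submatrix_inj (Equiv.sumCompl (· ∈ s)).injective

lemma minor_posDef {M : Matrix (Fin n) (Fin n) ℂ} (hM : M.PosDef) (s : Finset (Fin n)) :
    (M.submatrix (fun i : {a // a ∈ s} => (i : Fin n))
      (fun i : {a // a ∈ s} => (i : Fin n))).PosDef :=
  hM.submatrix_inj Subtype.coe_injective

lemma det_factor {M : Matrix (Fin n) (Fin n) ℂ} (hM : M.PosDef) (s : Finset (Fin n)) :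
    M.det = minorDet M s *
      (Sc (M.submatrix (Equiv.sumCompl (· ∈ s)) (Equiv.sumCompl (· ∈ s)))).det := by
  set e := Equiv.sumCompl (fun a : Fin n => a ∈ s) with he
  have hW : (M.submatrix e e).PosDef := Wsub_posDef hM s
  rw [← Matrix.det_submatrix_equiv_self e M, sc_det hW]
  congr 1

lemma det_factor_re {M : Matrix (Fin n) (Fin n) ℂ} (hM : M.PosDef) (s : Finset (Fin n)) :
    M.det.re = (minorDet M s).re * phiq M s := by
  have h2 := (sc_posDef (Wsub_posDef hM s)).1.det_eq_re
  have h1 : minorDet M s = (((minorDet M s).re : ℝ) : ℂ) := (minor_posDef hM s).1.det_eq_re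
  have h := det_factor hM s
  rw [h1, h2, ← Complex.ofReal_mul] at h
  rw [h, Complex.ofReal_re]
  rfl

lemma phiq_pos {M : Matrix (Fin n) (Fin n) ℂ} (hM : M.PosDef) (s : Finset (Fin n)) :
    0 < phiq M s := (sc_posDef (Wsub_posDef hM s)).det_re_pos

lemma minor_re_pos {M : Matrix (Fin n) (Fin n) ℂ} (hM : M.PosDef) (s : Finset (Fin n)) :
    0 < (minorDet M s).re := (minor_posDef hM s).det_re_pos

lemma Pne (hαn : α ≤ n) :
    (Finset.univ.powersetCard (n - α) : Finset (Finset (Fin n))).Nonempty := by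
  obtain ⟨t, _, ht⟩ : ∃ t ⊆ (Finset.univ : Finset (Fin n)), t.card = n - α :=
    Finset.exists_subset_card_eq (by simp only [Finset.card_univ, Fintype.card_fin]; exact Nat.sub_le n α)
  exact ⟨t, by simp [Finset.mem_powersetCard_univ, ht]⟩

lemma TTq_pos {M : Matrix (Fin n) (Fin n) ℂ} (hM : M.PosDef) (hαn : α ≤ n) :
    0 < TTq n α M := by
  apply div_pos _ hM.det_re_pos
  exact Finset.sum_pos (fun s _ => minor_re_pos hM s) (Pne hαn)

lemma TTq_eq_sum_phi {M : Matrix (Fin n) (Fin n) ℂ} (hM : M.PosDef) :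
    TTq n α M = ∑ s ∈ Finset.univ.powersetCard (n - α), (phiq M s)⁻¹ := by
  rw [TTq, Finset.sum_div]
  refine Finset.sum_congr rfl fun s _ => ?_
  have h := det_factor_re hM s
  have hm := minor_re_pos hM s
  have hp := phiq_pos hM s
  rw [h]
  field_simp

lemma quot_eq (hαn : α ≤ n) {M : Matrix (Fin n) (Fin n) ℂ} (hMpd : M.PosDef)
    (hM : M.IsHermitian) :
    esymm n hM.eigenvalues / esymm (n - α) hM.eigenvalues = (TTq n α M)⁻¹ := by
  have hdetprod : M.det = ((∏ i, hM.eigenvalues i : ℝ) : ℂ) := by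
    rw [hM.det_eq_prod_eigenvalues]; norm_cast
  have h1 : esymm n hM.eigenvalues = M.det.re := by
    have hps : (Finset.univ : Finset (Fin n)).powersetCard n = {Finset.univ} := by
      ext t
      rw [Finset.mem_powersetCard_univ, Finset.mem_singleton]
      constructor
      · intro h
        apply Finset.eq_univ_of_card
        rw [h, Fintype.card_fin]
      · rintro rfl
        simp
    rw [esymm, hps, Finset.sum_singleton, hdetprod, Complex.ofReal_re]
  have h2 : esymm (n - α) hM.eigenvalues
      = ∑ s ∈ Finset.univ.powersetCard (n - α), (minorDet M s).re := by
    have := sum_minors_eq hM (n - α) (by rw [Fintype.card_fin]; omega)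
    have h := congrArg Complex.re this
    rw [Complex.re_sum, Complex.ofReal_re] at h
    rw [esymm, ← h]
  rw [h1, h2, TTq, inv_div]

lemma posDef_real_smul {M : Matrix (Fin n) (Fin n) ℂ} (hM : M.PosDef) {r : ℝ} (hr : 0 < r) :
    (r • M).PosDef := by
  have hEq : r • M = ((r : ℂ)) • M := by
    ext i j
    simp [Matrix.smul_apply, Complex.real_smul]
  rw [hEq]
  refine Matrix.PosDef.of_dotProduct_mulVec_pos ?_ ?_
  · show (((r:ℂ)) • M)ᴴ = _
    rw [Matrix.conjTranspose_smul, hM.1.eq]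
    congr 1
    simp
  · intro x hx
    rw [Matrix.smul_mulVec, dotProduct_smul, smul_eq_mul]
    refine mul_pos ?_ (hM.dotProduct_mulVec_pos hx)
    rw [Complex.lt_def]
    simp [hr]

lemma TTq_smul (hαn : α ≤ n) {M : Matrix (Fin n) (Fin n) ℂ} (hM : M.PosDef) {r : ℝ}
    (hr : 0 < r) : TTq n α (r • M) = (r ^ α)⁻¹ * TTq n α M := by
  have hEq : r • M = ((r : ℂ)) • M := by
    ext i j
    simp [Matrix.smul_apply, Complex.real_smul]
  have hdet : (r • M).det = ((r:ℝ)^n : ℝ) * M.det := by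
    rw [hEq, Matrix.det_smul, Fintype.card_fin]
    norm_cast
  have hminor : ∀ s ∈ Finset.univ.powersetCard (n - α),
      minorDet (r • M) s = ((r:ℝ)^(n-α) : ℝ) * minorDet M s := by
    intro s hs
    have hcard : s.card = n - α := (Finset.mem_powersetCard_univ.mp hs)
    rw [minorDet, hEq]
    rw [show (((r:ℂ) • M).submatrix (fun i : {a // a ∈ s} => (i : Fin n))
      (fun i : {a // a ∈ s} => (i : Fin n)))
      = (r:ℂ) • (M.submatrix (fun i : {a // a ∈ s} => (i : Fin n))
        (fun i : {a // a ∈ s} => (i : Fin n))) from rfl]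
    rw [Matrix.det_smul]
    rw [show Fintype.card {a // a ∈ s} = n - α by rw [Fintype.card_coe, hcard]]
    norm_cast
  have hMre := hM.det_re_pos
  rw [TTq, TTq, hdet]
  have hminor' : ∀ s ∈ Finset.univ.powersetCard (n - α),
      (minorDet (r • M) s).re = ((((r:ℝ)^(n-α) : ℝ) : ℂ) * minorDet M s).re := fun s hs => by
    rw [hminor s hs]
  rw [Finset.sum_congr rfl hminor']
  have hre1 : ((((r:ℝ)^n : ℝ) : ℂ) * M.det).re = r^n * M.det.re :=
    Complex.re_ofReal_mul _ _
  rw [hre1]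
  have hre2 : ∑ s ∈ Finset.univ.powersetCard (n - α),
      (((((r:ℝ)^(n-α) : ℝ)) : ℂ) * minorDet M s).re
      = r^(n-α) * ∑ s ∈ Finset.univ.powersetCard (n - α), (minorDet M s).re := by
    rw [Finset.mul_sum]
    exact Finset.sum_congr rfl fun s _ => Complex.re_ofReal_mul _ _
  rw [hre2]
  have hrn : r ^ n = r ^ (n - α) * r ^ α := by
    rw [← pow_add]
    congr 1
    omega
  rw [hrn]
  have h1 : r ^ (n - α) ≠ 0 := by positivity
  have h2 : r ^ α ≠ 0 := by positivity
  field_simp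

end Assembly
section Final

open Finset

variable {n α : ℕ}

lemma quot_superadd (hα1 : 1 ≤ α) (hαn : α ≤ n) {A B : Matrix (Fin n) (Fin n) ℂ}
    (hA : A.PosDef) (hB : B.PosDef) (hC : (A + B).IsHermitian) :
    (esymm n hA.1.eigenvalues / esymm (n - α) hA.1.eigenvalues) ^ ((α : ℝ))⁻¹ +
      (esymm n hB.1.eigenvalues / esymm (n - α) hB.1.eigenvalues) ^ ((α : ℝ))⁻¹ ≤
      (esymm n hC.eigenvalues / esymm (n - α) hC.eigenvalues) ^ ((α : ℝ))⁻¹ := by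
  classical
  have hCpd : (A + B).PosDef := hA.add hB
  set β : ℝ := (α : ℝ) with hβdef
  have hβ : 0 < β := by
    rw [hβdef]
    exact_mod_cast hα1
  rw [quot_eq hαn hA hA.1, quot_eq hαn hB hB.1, quot_eq hαn hCpd hC]
  set P := (Finset.univ.powersetCard (n - α) : Finset (Finset (Fin n))) with hP
  set aS : Finset (Fin n) → ℝ := fun s => (phiq A s) ^ (β⁻¹) with haSdef
  set bS : Finset (Fin n) → ℝ := fun s => (phiq B s) ^ (β⁻¹) with hbSdef
  have haS : ∀ s ∈ P, 0 < aS s := fun s _ => Real.rpow_pos_of_pos (phiq_pos hA s) _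
  have hbS : ∀ s ∈ P, 0 < bS s := fun s _ => Real.rpow_pos_of_pos (phiq_pos hB s) _
  -- key superadditivity of φ^(1/α)
  have key : ∀ s ∈ P, aS s + bS s ≤ (phiq (A + B) s) ^ (β⁻¹) := by
    intro s hs
    have hcards : s.card = n - α := Finset.mem_powersetCard_univ.mp hs
    have hcard2 : Fintype.card {a : Fin n // ¬ a ∈ s} = α := by
      rw [Fintype.card_subtype_compl, Fintype.card_fin]
      rw [show Fintype.card {a : Fin n // a ∈ s} = s.card from Fintype.card_coe s]
      omega
    have hWA := Wsub_posDef hA s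
    have hWB := Wsub_posDef hB s
    have hWsum : ((A + B).submatrix (Equiv.sumCompl (· ∈ s)) (Equiv.sumCompl (· ∈ s)))
        = A.submatrix (Equiv.sumCompl (· ∈ s)) (Equiv.sumCompl (· ∈ s))
          + B.submatrix (Equiv.sumCompl (· ∈ s)) (Equiv.sumCompl (· ∈ s)) := rfl
    set WA := A.submatrix (Equiv.sumCompl (· ∈ s)) (Equiv.sumCompl (· ∈ s)) with hWAdef
    set WB := B.submatrix (Equiv.sumCompl (· ∈ s)) (Equiv.sumCompl (· ∈ s)) with hWBdef
    have hE := sc_superadd hWA hWB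
    have hX1 := sc_posDef hWA
    have hX2 := sc_posDef hWB
    have hF : (Sc WB + (Sc (WA + WB) - Sc WA - Sc WB)).PosSemidef := hX2.posSemidef.add hE
    have hsum2 : Sc WA + (Sc WB + (Sc (WA + WB) - Sc WA - Sc WB)) = Sc (WA + WB) := by abel
    have hcard1 : 1 ≤ Fintype.card {a : Fin n // ¬ a ∈ s} := by omega
    have ineq1 := det_rpow_superadd hX1 hF hcard1
    have ineq2 := det_rpow_superadd hX2 hE hcard1
    rw [hsum2] at ineq1
    rw [hcard2] at ineq1 ineq2
    have hdetE : 0 ≤ (Sc (WA + WB) - Sc WA - Sc WB).det.re ^ (β⁻¹) :=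
      Real.rpow_nonneg hE.det_re_nonneg _
    have hphiA : phiq A s = (Sc WA).det.re := rfl
    have hphiB : phiq B s = (Sc WB).det.re := rfl
    have hphiC : phiq (A + B) s = (Sc (WA + WB)).det.re := by
      rw [phiq, hWsum]
    rw [haSdef, hbSdef]
    simp only []
    rw [hphiA, hphiB, hphiC]
    have h2 : (Sc WB).det.re ^ (β⁻¹) ≤ (Sc WB + (Sc (WA + WB) - Sc WA - Sc WB)).det.re ^ (β⁻¹) := by
      calc (Sc WB).det.re ^ (β⁻¹)
          ≤ (Sc WB).det.re ^ (β⁻¹) + (Sc (WA+WB) - Sc WA - Sc WB).det.re ^ (β⁻¹) := by linarith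
      _ ≤ _ := ineq2
    calc (Sc WA).det.re ^ (β⁻¹) + (Sc WB).det.re ^ (β⁻¹)
        ≤ (Sc WA).det.re ^ (β⁻¹) + (Sc WB + (Sc (WA+WB) - Sc WA - Sc WB)).det.re ^ (β⁻¹) := by
          linarith
    _ ≤ (Sc (WA + WB)).det.re ^ (β⁻¹) := ineq1
  have key2 : ∀ s ∈ P, (aS s + bS s) ^ β ≤ phiq (A + B) s := by
    intro s hs
    have h := Real.rpow_le_rpow (add_pos (haS s hs) (hbS s hs)).le (key s hs) hβ.le
    rwa [← Real.rpow_mul (phiq_pos hCpd s).le, inv_mul_cancel₀ hβ.ne', Real.rpow_one] at h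
  -- sums
  have hTC : TTq n α (A + B) ≤ ∑ s ∈ P, (aS s + bS s) ^ (-β) := by
    rw [TTq_eq_sum_phi hCpd]
    refine Finset.sum_le_sum fun s hs => ?_
    rw [Real.rpow_neg (add_pos (haS s hs) (hbS s hs)).le]
    exact inv_anti₀ (Real.rpow_pos_of_pos (add_pos (haS s hs) (hbS s hs)) _) (key2 s hs)
  have hchain := le_trans hTC (sum_rpow_neg_add_le P (Pne hαn) hβ aS bS haS hbS)
  have hsumA : ∑ s ∈ P, aS s ^ (-β) = TTq n α A := by
    rw [TTq_eq_sum_phi hA]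
    refine Finset.sum_congr rfl fun s _ => ?_
    rw [haSdef]
    simp only []
    rw [← Real.rpow_mul (phiq_pos hA s).le]
    rw [show β⁻¹ * -β = -1 by field_simp]
    exact Real.rpow_neg_one _
  have hsumB : ∑ s ∈ P, bS s ^ (-β) = TTq n α B := by
    rw [TTq_eq_sum_phi hB]
    refine Finset.sum_congr rfl fun s _ => ?_
    rw [hbSdef]
    simp only []
    rw [← Real.rpow_mul (phiq_pos hB s).le]
    rw [show β⁻¹ * -β = -1 by field_simp]
    exact Real.rpow_neg_one _
  rw [hsumA, hsumB] at hchain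
  have hTA := TTq_pos hA hαn
  have hTB := TTq_pos hB hαn
  have hTC0 := TTq_pos hCpd hαn
  have hSA : (TTq n α A)⁻¹ ^ (β⁻¹) = TTq n α A ^ (-β⁻¹) := by
    rw [Real.inv_rpow hTA.le, ← Real.rpow_neg hTA.le]
  have hSB : (TTq n α B)⁻¹ ^ (β⁻¹) = TTq n α B ^ (-β⁻¹) := by
    rw [Real.inv_rpow hTB.le, ← Real.rpow_neg hTB.le]
  have hSC : (TTq n α (A + B))⁻¹ ^ (β⁻¹) = TTq n α (A + B) ^ (-β⁻¹) := by
    rw [Real.inv_rpow hTC0.le, ← Real.rpow_neg hTC0.le]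
  rw [hSA, hSB, hSC]
  set SA := TTq n α A ^ (-β⁻¹) with hSAdef
  set SB := TTq n α B ^ (-β⁻¹) with hSBdef
  have hSApos : 0 < SA := Real.rpow_pos_of_pos hTA _
  have hSBpos : 0 < SB := Real.rpow_pos_of_pos hTB _
  have hfin := Real.rpow_le_rpow_of_nonpos hTC0 hchain (neg_nonpos.mpr (by positivity) : -β⁻¹ ≤ 0)
  calc SA + SB = ((SA + SB) ^ (-β)) ^ (-β⁻¹) := by
        rw [← Real.rpow_mul (add_pos hSApos hSBpos).le, show -β * -β⁻¹ = 1 by field_simp,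
          Real.rpow_one]
  _ ≤ TTq n α (A + B) ^ (-β⁻¹) := hfin

lemma quot_smul (hα1 : 1 ≤ α) (hαn : α ≤ n) {M : Matrix (Fin n) (Fin n) ℂ}
    (hM : M.PosDef) {r : ℝ} (hr : 0 < r) (h' : (r • M).IsHermitian) :
    (esymm n h'.eigenvalues / esymm (n - α) h'.eigenvalues) ^ ((α : ℝ))⁻¹ =
      r * (esymm n hM.1.eigenvalues / esymm (n - α) hM.1.eigenvalues) ^ ((α : ℝ))⁻¹ := by
  have hβ : (0:ℝ) < (α : ℝ) := by exact_mod_cast hα1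
  rw [quot_eq hαn (posDef_real_smul hM hr) h', quot_eq hαn hM hM.1, TTq_smul hαn hM hr]
  have hT := TTq_pos hM hαn
  rw [mul_inv, inv_inv]
  rw [Real.mul_rpow (by positivity) (by positivity)]
  congr 1
  rw [← Real.rpow_natCast r α, ← Real.rpow_mul hr.le, mul_inv_cancel₀ hβ.ne', Real.rpow_one]

end Final

/-- matrix-level concavity of the `(n, n-α)`-quotient operator on
Hermitian positive definite matrices. -/
theorem hermitian_quotient_rpow_concave (n α : ℕ) (hn : 2 ≤ n) (hα1 : 1 ≤ α) (hαn : α ≤ n)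
    (A B : Matrix (Fin n) (Fin n) ℂ) (hA : A.PosDef) (hB : B.PosDef)
    (t : ℝ) (ht0 : 0 ≤ t) (ht1 : t ≤ 1) :
    ((1 - t) • A + t • B).PosDef ∧
      ∀ hC : ((1 - t) • A + t • B).IsHermitian,
        (esymm n hC.eigenvalues / esymm (n - α) hC.eigenvalues) ^ ((1 : ℝ) / (α : ℝ)) ≥
          (1 - t) * (esymm n hA.1.eigenvalues / esymm (n - α) hA.1.eigenvalues) ^
              ((1 : ℝ) / (α : ℝ)) +
            t * (esymm n hB.1.eigenvalues / esymm (n - α) hB.1.eigenvalues) ^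
              ((1 : ℝ) / (α : ℝ)) := by
  by_cases h0 : t = 0
  · subst h0
    have hmat : (1 - (0:ℝ)) • A + (0:ℝ) • B = A := by simp
    rw [hmat]
    refine ⟨hA, fun hC => ?_⟩
    rw [show hC = hA.1 from rfl, ge_iff_le]
    apply le_of_eq
    ring
  by_cases h1 : t = 1
  · subst h1
    have hmat : (1 - (1:ℝ)) • A + (1:ℝ) • B = B := by simp
    rw [hmat]
    refine ⟨hB, fun hC => ?_⟩
    rw [show hC = hB.1 from rfl, ge_iff_le]
    apply le_of_eq
    ring
  have ht0' : 0 < t := lt_of_le_of_ne ht0 (Ne.symm h0)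
  have ht1' : 0 < 1 - t := by
    have : t < 1 := lt_of_le_of_ne ht1 h1
    linarith
  have hA' : ((1 - t) • A).PosDef := posDef_real_smul hA ht1'
  have hB' : (t • B).PosDef := posDef_real_smul hB ht0'
  refine ⟨hA'.add hB', fun hC => ?_⟩
  rw [ge_iff_le]
  simp only [one_div]
  have hsup := quot_superadd hα1 hαn hA' hB' hC
  have hsA := quot_smul hα1 hαn hA ht1' hA'.1
  have hsB := quot_smul hα1 hαn hB ht0' hB'.1
  rw [hsA, hsB] at hsup
  exact hsup
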